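/- For a continuous function g : [0,1] → ℝ with g(0) = (a/(a+1))·g(1), define ψ(g)(t) = ((a+1)/(a+t))·diag(g(t)·1_{a·n}, t·g(t)·1_n) ∈ M_{n'}(ℂ) for t ∈ [0,1]. Then ψ(g) belongs to A(n,n'), ψ(g) is self-adjoint, and tr(ψ(g)(t)) = g(t) for every t ∈ [0,1]. Moreover, g ↦ ψ(g) is linear, and ψ(g)(t) is a positive semidefinite matrix for every t whenever g takes only nonnegative values. -/

import Mathlib

open scoped Matrix.Norms.L2Operator ComplexOrder
open Filter MeasureTheory

noncomputable section

/-- The unit interval `[0,1]`. -/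
abbrev I01 : Type := unitInterval

/-- Square complex matrices of size `N`. -/
abbrev Mat (N : ℕ) : Type := Matrix (Fin N) (Fin N) ℂ

/-- Block-diagonal matrix with `m` diagonal blocks of size `k` (block `0` in the upper left),
realized as an `N × N` matrix, where `h : k * m = N`. -/
def cdiag {k m N : ℕ} (h : k * m = N) (blocks : Fin m → Mat k) : Mat N :=
  Matrix.reindex (finProdFinEquiv.trans (finCongr h)) (finProdFinEquiv.trans (finCongr h))
    (Matrix.blockDiagonal blocks)

-- auxiliary lemmas
lemma cdiag_smul {k m N : ℕ} (h : k * m = N) (c : ℂ) (b : Fin m → Mat k) :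
    cdiag h (fun i => c • b i) = c • cdiag h b := by
  unfold cdiag
  rw [show (fun i => c • b i) = c • b from rfl, Matrix.blockDiagonal_smul]
  simp [Matrix.reindex_apply, Matrix.submatrix_smul]

lemma cdiag_add {k m N : ℕ} (h : k * m = N) (b₁ b₂ : Fin m → Mat k) :
    cdiag h (fun i => b₁ i + b₂ i) = cdiag h b₁ + cdiag h b₂ := by
  unfold cdiag
  rw [show (fun i => b₁ i + b₂ i) = b₁ + b₂ from rfl, Matrix.blockDiagonal_add]
  simp [Matrix.reindex_apply, Matrix.submatrix_add]

lemma cdiag_diagonal {k m N : ℕ} (h : k * m = N) (d : Fin m → Fin k → ℂ) :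
    cdiag h (fun i => Matrix.diagonal (d i)) =
      Matrix.diagonal (fun j =>
        d ((finProdFinEquiv.trans (finCongr h)).symm j).2
          ((finProdFinEquiv.trans (finCongr h)).symm j).1) := by
  unfold cdiag
  rw [Matrix.blockDiagonal_diagonal, Matrix.reindex_apply, Matrix.submatrix_diagonal_equiv]
  rfl

lemma smul_one_diag {k : ℕ} (c : ℂ) : c • (1 : Mat k) = Matrix.diagonal (fun _ => c) := by
  ext i j
  rcases eq_or_ne i j with rfl | hij
  · simp
  · simp [Matrix.one_apply_ne hij, Matrix.diagonal_apply_ne _ hij]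

/-- The Razak building block `A(n, n')` with `n' = n * (a + 1)`, realized as a subset of
`C([0,1], M_N(ℂ))` where `h : n * (a + 1) = N`: those continuous matrix-valued functions `f`
for which there is `c ∈ M_n(ℂ)` with `f 0 = diag(c, …, c, 0_n)` (`a` copies of `c`) and
`f 1 = diag(c, …, c)` (`a + 1` copies of `c`). -/
def razakA (n a : ℕ) {N : ℕ} (h : n * (a + 1) = N) : Set C(I01, Mat N) :=
  {f | ∃ c : Mat n,
    f 0 = cdiag h (fun i : Fin (a + 1) => if (i : ℕ) < a then c else 0) ∧
    f 1 = cdiag h (fun _ : Fin (a + 1) => c)}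

/-- The normalized trace of a square complex matrix. -/
def ntr {N : ℕ} (M : Mat N) : ℂ := M.trace / N

/-- The section `ψ`: for `g : [0,1] → ℝ`,
`ψ(g)(t) = ((a+1)/(a+t)) · diag(g(t)·1_{a·n}, t·g(t)·1_n)`. -/
def psiMap (n a : ℕ) (g : C(I01, ℝ)) : I01 → Mat (n * (a + 1)) :=
  fun t => (((((a : ℝ) + 1) / ((a : ℝ) + (t : ℝ))) : ℝ) : ℂ) •
    cdiag rfl (fun i : Fin (a + 1) =>
      if (i : ℕ) < a then ((g t : ℝ) : ℂ) • (1 : Mat n)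
      else ((((t : ℝ) * g t) : ℝ) : ℂ) • (1 : Mat n))

lemma psiMap_diag (n a : ℕ) (g : C(I01, ℝ)) (t : I01) :
    psiMap n a g t = Matrix.diagonal (fun j : Fin (n * (a + 1)) =>
      (((((a : ℝ) + 1) / ((a : ℝ) + (t : ℝ)) *
        (if ((finProdFinEquiv.trans (finCongr (rfl : n * (a+1) = n * (a+1)))).symm j).2.val < a
          then g t else (t : ℝ) * g t)) : ℝ) : ℂ)) := by
  unfold psiMap
  have hb : (fun i : Fin (a + 1) =>
      if (i : ℕ) < a then ((g t : ℝ) : ℂ) • (1 : Mat n)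
      else ((((t : ℝ) * g t) : ℝ) : ℂ) • (1 : Mat n))
      = fun i : Fin (a + 1) => Matrix.diagonal (fun _ : Fin n =>
          if (i : ℕ) < a then ((g t : ℝ) : ℂ) else ((((t : ℝ) * g t) : ℝ) : ℂ)) := by
    funext i
    split_ifs <;> rw [smul_one_diag]
  rw [hb, cdiag_diagonal, ← Matrix.diagonal_smul]
  refine congrArg Matrix.diagonal (funext fun j => ?_)
  simp only [Pi.smul_apply, smul_eq_mul]
  split_ifs <;> push_cast <;> ring

lemma fin_sum_ite (a : ℕ) (x y : ℝ) :
    ∑ i : Fin (a + 1), (if (i : ℕ) < a then x else y) = a * x + y := by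
  rw [Fin.sum_univ_castSucc]
  simp [Fin.is_lt]

/-- for continuous `g : [0,1] → ℝ` with `g(0) = (a/(a+1))·g(1)`, `ψ(g)` belongs
to `A(n,n')`, is self-adjoint and has normalized trace `g(t)` at each point; moreover `ψ` is
linear, and `ψ(g)(t)` is positive semidefinite for all `t` whenever `g ≥ 0`. -/
theorem razak_trace_section (n a : ℕ) (hn : 0 < n) (ha : 0 < a) :
    (∀ g : C(I01, ℝ), g 0 = ((a : ℝ) / ((a : ℝ) + 1)) * g 1 →
      Continuous (psiMap n a g) ∧
      (∃ f : C(I01, Mat (n * (a + 1))), (∀ t : I01, f t = psiMap n a g t) ∧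
        f ∈ razakA n a rfl) ∧
      (∀ t : I01, star (psiMap n a g t) = psiMap n a g t) ∧
      (∀ t : I01, ntr (psiMap n a g t) = ((g t : ℝ) : ℂ))) ∧
    (∀ g₁ g₂ : C(I01, ℝ), psiMap n a (g₁ + g₂) = psiMap n a g₁ + psiMap n a g₂) ∧
    (∀ (r : ℝ) (g : C(I01, ℝ)), psiMap n a (r • g) = r • psiMap n a g) ∧
    (∀ g : C(I01, ℝ), (∀ t : I01, 0 ≤ g t) → ∀ t : I01, (psiMap n a g t).PosSemidef) := by
  have haR : (0 : ℝ) < a := by exact_mod_cast ha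
  have hden : ∀ t : I01, ((a : ℝ) + (t : ℝ)) ≠ 0 := fun t => by
    have := t.2.1; positivity
  refine ⟨fun g hg => ⟨?_, ?_, ?_, ?_⟩, ?_, ?_, ?_⟩
  · -- continuity
    unfold psiMap
    apply Continuous.fun_smul
    · exact Complex.continuous_ofReal.comp
        (continuous_const.div (continuous_const.add continuous_subtype_val) hden)
    · simp only [cdiag, Matrix.reindex_apply]
      apply Continuous.matrix_submatrix
      apply Continuous.matrix_blockDiagonal
      apply continuous_pi
      intro i
      split_ifs with hi
      · exact Continuous.smul (Complex.continuous_ofReal.comp g.continuous) continuous_const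
      · exact Continuous.smul (Complex.continuous_ofReal.comp
          (continuous_subtype_val.mul g.continuous)) continuous_const
  · -- membership
    have hcont : Continuous (psiMap n a g) := by
      unfold psiMap
      apply Continuous.fun_smul
      · exact Complex.continuous_ofReal.comp
          (continuous_const.div (continuous_const.add continuous_subtype_val) hden)
      · simp only [cdiag, Matrix.reindex_apply]
        apply Continuous.matrix_submatrix
        apply Continuous.matrix_blockDiagonal
        apply continuous_pi
        intro i
        split_ifs with hi
        · exact Continuous.smul (Complex.continuous_ofReal.comp g.continuous) continuous_const
        · exact Continuous.smul (Complex.continuous_ofReal.comp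
            (continuous_subtype_val.mul g.continuous)) continuous_const
    refine ⟨⟨psiMap n a g, hcont⟩, fun t => rfl, ⟨((g 1 : ℝ) : ℂ) • (1 : Mat n), ?_, ?_⟩⟩
    · show psiMap n a g 0 = _
      unfold psiMap
      have h00 : ((0 : I01) : ℝ) = 0 := rfl
      simp only [h00, zero_mul, Complex.ofReal_zero, zero_smul, add_zero]
      rw [← cdiag_smul]
      refine congrArg (cdiag rfl) (funext fun i => ?_)
      split_ifs with hi
      · rw [smul_smul, ← Complex.ofReal_mul]
        congr 2
        rw [hg]
        field_simp
      · simp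
    · show psiMap n a g 1 = _
      unfold psiMap
      have h11 : ((1 : I01) : ℝ) = 1 := rfl
      have hone : (((a : ℝ) + 1) / ((a : ℝ) + 1)) = 1 := div_self (by positivity)
      simp only [h11, one_mul, hone, Complex.ofReal_one, one_smul]
      refine congrArg (cdiag rfl) (funext fun i => ?_)
      split_ifs <;> rfl
  · -- self-adjoint
    intro t
    rw [psiMap_diag, Matrix.star_eq_conjTranspose, Matrix.diagonal_conjTranspose]
    refine congrArg Matrix.diagonal (funext fun j => ?_)
    simp [Complex.star_def, Complex.conj_ofReal]
  · -- trace
    intro t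
    rw [psiMap_diag, ntr, Matrix.trace_diagonal]
    rw [← Complex.ofReal_sum]
    have : ((n * (a + 1) : ℕ) : ℂ) = (((n * (a + 1) : ℕ) : ℝ) : ℂ) := by push_cast; ring
    rw [this, ← Complex.ofReal_div]
    congr 1
    have hn' : (n : ℝ) ≠ 0 := by positivity
    have hsum : (∑ j : Fin (n * (a + 1)),
        ((a : ℝ) + 1) / ((a : ℝ) + (t : ℝ)) *
          (if ((finProdFinEquiv.trans
              (finCongr (rfl : n * (a + 1) = n * (a + 1)))).symm j).2.val < a
            then g t else (t : ℝ) * g t))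
        = ∑ p : Fin n × Fin (a + 1),
          ((a : ℝ) + 1) / ((a : ℝ) + (t : ℝ)) *
            (if (p.2 : ℕ) < a then g t else (t : ℝ) * g t) :=
      Fintype.sum_equiv (finProdFinEquiv.trans
        (finCongr (rfl : n * (a + 1) = n * (a + 1)))).symm _ _ (fun j => rfl)
    rw [hsum, Fintype.sum_prod_type]
    simp only [← Finset.mul_sum, fin_sum_ite, Finset.sum_const, Finset.card_univ,
      Fintype.card_fin, nsmul_eq_mul]
    have hNt : ((n : ℝ) * ((a : ℝ) + 1)) ≠ 0 := by positivity
    push_cast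
    rw [div_eq_iff hNt]
    field_simp [hden t]
  · -- additivity
    intro g₁ g₂
    funext t
    unfold psiMap
    have hb : (fun i : Fin (a + 1) =>
        if (i : ℕ) < a then (((g₁ + g₂) t : ℝ) : ℂ) • (1 : Mat n)
        else ((((t : ℝ) * (g₁ + g₂) t) : ℝ) : ℂ) • (1 : Mat n))
        = fun i : Fin (a + 1) =>
          (if (i : ℕ) < a then ((g₁ t : ℝ) : ℂ) • (1 : Mat n)
            else ((((t : ℝ) * g₁ t) : ℝ) : ℂ) • (1 : Mat n)) +
          (if (i : ℕ) < a then ((g₂ t : ℝ) : ℂ) • (1 : Mat n)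
            else ((((t : ℝ) * g₂ t) : ℝ) : ℂ) • (1 : Mat n)) := by
      funext i
      split_ifs <;> rw [← add_smul] <;> congr 1 <;> simp only [ContinuousMap.add_apply] <;> push_cast <;> ring
    rw [hb, cdiag_add, smul_add]
    rfl
  · -- homogeneity
    intro r g
    funext t
    unfold psiMap
    have hb : (fun i : Fin (a + 1) =>
        if (i : ℕ) < a then (((r • g) t : ℝ) : ℂ) • (1 : Mat n)
        else ((((t : ℝ) * (r • g) t) : ℝ) : ℂ) • (1 : Mat n))
        = fun i : Fin (a + 1) =>
          ((r : ℂ)) • (if (i : ℕ) < a then ((g t : ℝ) : ℂ) • (1 : Mat n)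
            else ((((t : ℝ) * g t) : ℝ) : ℂ) • (1 : Mat n)) := by
      funext i
      split_ifs <;> rw [smul_smul] <;> congr 1 <;> simp only [ContinuousMap.smul_apply, smul_eq_mul] <;> push_cast <;> ring
    have hcast : ∀ (M : Mat (n * (a + 1))), ((r : ℝ) : ℂ) • M = r • M := fun M => by
      rw [← smul_one_smul ℂ r M, Complex.real_smul, mul_one]
    rw [hb, cdiag_smul, hcast, smul_comm]
    rfl
  · -- positivity
    intro g hgpos t
    rw [psiMap_diag]
    rw [Matrix.posSemidef_diagonal_iff]
    intro j
    rw [Complex.zero_le_real]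
    have h0t : (0 : ℝ) ≤ (t : ℝ) := t.2.1
    have hgt : 0 ≤ g t := hgpos t
    have hc : 0 ≤ ((a : ℝ) + 1) / ((a : ℝ) + (t : ℝ)) := by positivity
    refine mul_nonneg hc ?_
    split_ifs
    · exact hgt
    · exact mul_nonneg h0t hgt
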